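/- Let λ > 1, set k_n = λ^n, and let σ > 0. Consider the infinite linear system of stationarity equations: 0 = σ² − k₁² s₁ + k₁² s₂ and 0 = k_{n−1}² s_{n−1} − (k_{n−1}² + k_n²) s_n + k_n² s_{n+1} for all n ≥ 2. There is exactly one real sequence s = (s_n)_{n≥1} with Σ_{n≥1} |s_n| < ∞ satisfying these equations, namely s_n = σ² λ^{−2n} / (1 − λ^{−2}) for all n ≥ 1. Moreover this sequence satisfies Σ_{n≥1} λ^{2βn} s_n² < ∞ for every β < 1. -/

import Mathlib

set_option maxHeartbeats 2000000 in
theorem stmt_0 (lam σ : ℝ) (hlam : 1 < lam) (hσ : 0 < σ) :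
    (∀ s : ℕ → ℝ,
      ((Summable fun n : ℕ => |s n|) ∧
        (0 = σ ^ 2 - lam ^ 2 * s 0 + lam ^ 2 * s 1) ∧
        (∀ n : ℕ, 0 = lam ^ (2 * (n + 1)) * s n
            - (lam ^ (2 * (n + 1)) + lam ^ (2 * (n + 2))) * s (n + 1)
            + lam ^ (2 * (n + 2)) * s (n + 2)))
      ↔ (∀ n : ℕ, s n = σ ^ 2 * lam ^ (-(2 * ((n : ℤ) + 1))) / (1 - lam ^ (-2 : ℤ))))
    ∧ (∀ β : ℝ, β < 1 →
        Summable fun n : ℕ =>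
          lam ^ (2 * β * ((n : ℝ) + 1)) *
            (σ ^ 2 * lam ^ (-(2 * ((n : ℤ) + 1))) / (1 - lam ^ (-2 : ℤ))) ^ 2) := by
  have hlam0 : (0:ℝ) < lam := lt_trans one_pos hlam
  have hlamne : lam ≠ 0 := ne_of_gt hlam0
  have hl2 : (1:ℝ) < lam ^ 2 := by nlinarith
  have hsub : (0:ℝ) < lam ^ 2 - 1 := by linarith
  have hne2 : lam ^ 2 - 1 ≠ 0 := ne_of_gt hsub
  have hl2pos : (0:ℝ) < lam ^ 2 := by linarith
  -- closed form for the target sequence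
  have ht : ∀ n : ℕ, σ ^ 2 * lam ^ (-(2 * ((n : ℤ) + 1))) / (1 - lam ^ (-2 : ℤ))
      = σ ^ 2 / ((lam ^ 2 - 1) * lam ^ (2 * n)) := by
    intro n
    have h1 : lam ^ (-(2 * ((n : ℤ) + 1))) = ((lam ^ (2 * (n + 1)) : ℝ))⁻¹ := by
      have he : (-(2 * ((n : ℤ) + 1))) = -(((2 * (n + 1) : ℕ) : ℤ)) := by push_cast; ring
      rw [he, ← zpow_natCast lam (2 * (n + 1)), ← zpow_neg]
    have h2 : lam ^ (-2 : ℤ) = ((lam ^ 2 : ℝ))⁻¹ := by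
      rw [← zpow_natCast lam 2, ← zpow_neg]
      norm_num
    rw [h1, h2]
    have hp : (lam : ℝ) ^ (2 * (n + 1)) ≠ 0 := pow_ne_zero _ hlamne
    have hd : (1 : ℝ) - (lam ^ 2)⁻¹ ≠ 0 := by
      have : (lam ^ 2)⁻¹ < 1 := by
        rw [inv_lt_one_iff₀]; right; exact hl2
      intro h; rw [sub_eq_zero] at h; linarith
    field_simp
    ring
  constructor
  · intro s
    constructor
    · rintro ⟨hsum, he1, he2⟩
      -- difference sequence
      have hd : ∀ n : ℕ, s n - s (n + 1) = σ ^ 2 / lam ^ (2 * (n + 1)) := by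
        intro n
        induction n with
        | zero =>
          have hp : (lam : ℝ) ^ (2 * (0 + 1)) ≠ 0 := pow_ne_zero _ hlamne
          rw [eq_div_iff hp]
          simp only [Nat.zero_add, mul_one] at *
          nlinarith [he1]
        | succ n ih =>
          have hp1 : (lam : ℝ) ^ (2 * (n + 1)) ≠ 0 := pow_ne_zero _ hlamne
          have hp2 : (lam : ℝ) ^ (2 * (n + 2)) ≠ 0 := pow_ne_zero _ hlamne
          have h' : lam ^ (2 * (n + 1)) * (s n - s (n + 1)) = σ ^ 2 := by
            rw [ih]; field_simp
          have key : lam ^ (2 * (n + 2)) * (s (n + 1) - s (n + 2)) = σ ^ 2 := by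
            linear_combination h' + he2 n
          rw [eq_div_iff hp2]
          linear_combination key
      -- s tends to 0
      have htend : Filter.Tendsto s Filter.atTop (nhds 0) :=
        hsum.of_abs.tendsto_atTop_zero
      intro n
      rw [ht n]
      -- geometric series for the tail
      set S : ℝ := σ ^ 2 / ((lam ^ 2 - 1) * lam ^ (2 * n)) with hS
      have hr0 : (0:ℝ) ≤ (lam ^ 2)⁻¹ := by positivity
      have hr1 : ((lam ^ 2 : ℝ))⁻¹ < 1 := by
        rw [inv_lt_one_iff₀]; right; exact hl2
      have hgeo : HasSum (fun i : ℕ => σ ^ 2 / lam ^ (2 * (n + i + 1))) S := by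
        have h0 := (hasSum_geometric_of_lt_one hr0 hr1).mul_left
          (σ ^ 2 / lam ^ (2 * (n + 1)))
        have hfun : ∀ i : ℕ, σ ^ 2 / lam ^ (2 * (n + 1)) * ((lam ^ 2)⁻¹) ^ i
            = σ ^ 2 / lam ^ (2 * (n + i + 1)) := by
          intro i
          have : (lam : ℝ) ^ (2 * (n + i + 1)) = lam ^ (2 * (n + 1)) * (lam ^ 2) ^ i := by
            rw [← pow_mul, ← pow_add]; ring_nf
          rw [this]
          field_simp
          rw [← mul_pow, one_div_mul_cancel (pow_ne_zero 2 hlamne), one_pow]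
        have hval : σ ^ 2 / lam ^ (2 * (n + 1)) * (1 - (lam ^ 2)⁻¹)⁻¹ = S := by
          have hd2 : (1 : ℝ) - (lam ^ 2)⁻¹ ≠ 0 := by
            intro h; rw [sub_eq_zero] at h
            have := hr1; rw [← h] at this; linarith
          rw [hS]
          have hexp : (lam : ℝ) ^ (2 * (n + 1)) = lam ^ (2 * n) * lam ^ 2 := by
            rw [← pow_add]; ring_nf
          rw [hexp]
          field_simp
        rw [← hval]
        have heq : (fun i : ℕ => σ ^ 2 / lam ^ (2 * (n + i + 1)))
            = fun i : ℕ => σ ^ 2 / lam ^ (2 * (n + 1)) * ((lam ^ 2)⁻¹) ^ i :=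
          funext fun i => (hfun i).symm
        rw [heq]
        exact h0
      -- partial sums are telescoping
      have hpartial : ∀ N : ℕ, ∑ i ∈ Finset.range N, σ ^ 2 / lam ^ (2 * (n + i + 1))
          = s n - s (n + N) := by
        intro N
        have := Finset.sum_range_sub' (fun i => s (n + i)) N
        rw [Nat.add_zero] at this
        rw [← this]
        apply Finset.sum_congr rfl
        intro i _
        rw [show n + (i + 1) = (n + i) + 1 by ring, hd (n + i),
          show 2 * (n + i + 1) = 2 * (n + (i + 1)) by ring]
      have hlim1 : Filter.Tendsto (fun N : ℕ => s n - s (n + N)) Filter.atTop (nhds S) := by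
        have := hgeo.tendsto_sum_nat
        refine this.congr ?_
        intro N
        exact hpartial N
      have hlim2 : Filter.Tendsto (fun N : ℕ => s n - s (n + N)) Filter.atTop (nhds (s n - 0)) := by
        have h1 : Filter.Tendsto (fun N : ℕ => s (n + N)) Filter.atTop (nhds 0) := by
          have h2 := htend.comp (Filter.tendsto_add_atTop_nat n)
          simp only [Function.comp_def, Nat.add_comm _ n] at h2
          exact h2
        exact Filter.Tendsto.const_sub _ h1
      have := tendsto_nhds_unique hlim2 hlim1
      rw [sub_zero] at this
      exact this
    · -- converse: the explicit formula is a summable solution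
      intro hform
      have hsimp : ∀ n : ℕ, s n = σ ^ 2 / ((lam ^ 2 - 1) * lam ^ (2 * n)) := by
        intro n; rw [hform n, ht n]
      refine ⟨?_, ?_, ?_⟩
      · have hr0 : (0:ℝ) ≤ (lam ^ 2)⁻¹ := by positivity
        have hr1 : ((lam ^ 2 : ℝ))⁻¹ < 1 := by
          rw [inv_lt_one_iff₀]; right; exact hl2
        have := (summable_geometric_of_lt_one hr0 hr1).mul_left (σ ^ 2 / (lam ^ 2 - 1))
        refine this.congr ?_
        intro n
        rw [hsimp n, abs_of_nonneg (by positivity)]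
        rw [pow_mul]
        field_simp
        rw [← mul_pow, one_div_mul_cancel (pow_ne_zero 2 hlamne), one_pow]
      · rw [hsimp 0, hsimp 1]
        have hL : (lam : ℝ) ^ 2 ≠ 0 := pow_ne_zero _ hlamne
        simp only [Nat.mul_zero, pow_zero, Nat.mul_one, mul_one]
        field_simp
        ring
      · intro n
        rw [hsimp n, hsimp (n + 1), hsimp (n + 2)]
        simp only [pow_mul]
        have hL : (lam : ℝ) ^ 2 ≠ 0 := pow_ne_zero _ hlamne
        have hLn : ∀ m : ℕ, ((lam : ℝ) ^ 2) ^ m ≠ 0 := fun m => pow_ne_zero _ hL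
        field_simp
        ring
  · -- second part: weighted summability
    intro β hβ
    have hr : lam ^ (2 * β - 4) < 1 :=
      Real.rpow_lt_one_of_one_lt_of_neg hlam (by linarith)
    have hr0 : (0:ℝ) ≤ lam ^ (2 * β - 4) := Real.rpow_nonneg hlam0.le _
    have hgeo := (summable_geometric_of_lt_one hr0 hr).mul_left
      (σ ^ 4 / (lam ^ 2 - 1) ^ 2 * lam ^ (2 * β))
    refine hgeo.congr ?_
    intro n
    rw [ht n]
    have h1 : lam ^ (2 * β * ((n : ℝ) + 1)) = lam ^ (2 * β) * (lam ^ (2 * β)) ^ n := by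
      rw [← Real.rpow_natCast (lam ^ (2 * β)) n, ← Real.rpow_mul hlam0.le,
        ← Real.rpow_add hlam0]
      congr 1
      ring
    have h2 : (lam ^ (2 * β - 4)) ^ n = (lam ^ (2 * β)) ^ n / ((lam ^ 4 : ℝ)) ^ n := by
      rw [← div_pow]
      congr 1
      rw [show (lam:ℝ) ^ 4 = lam ^ ((4:ℕ):ℝ) by rw [Real.rpow_natCast],
        ← Real.rpow_sub hlam0]
      norm_num
    rw [h1, h2, pow_mul]
    have hpl : ((lam:ℝ) ^ 4) ^ n ≠ 0 := pow_ne_zero _ (pow_ne_zero _ hlamne)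
    have hpl2 : (((lam:ℝ) ^ 2)) ^ n ≠ 0 := pow_ne_zero _ (pow_ne_zero _ hlamne)
    field_simp
    ring
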